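/- Let L be a free graded Lie algebra over a field k of characteristic ≠ 2 on generators x_1,…,x_n of positive degrees, and let L' be the Lie subalgebra generated by a family of elements g_j = [x_{a_j}, x_{b_j}] (graded Lie brackets of distinct generators, indexed by edges of a simple graph). If the canonical surjection from the free graded Lie algebra on symbols indexed by the edges onto L' is an isomorphism (which holds since any subalgebra of a free graded Lie algebra is free), then the induced map of associative algebras k⟨y_j : j ∈ E⟩ → B, where B is the subalgebra of the tensor algebra T(x_1,…,x_n) generated by the elements [x_{a_j}, x_{b_j}], is an isomorphism. -/

import Mathlib

open scoped Classical

/-- The graded commutator `[x_a, x_b] = x_a x_b − (−1)^{|x_a||x_b|} x_b x_a`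
in the tensor algebra `T = k⟨x_1,…,x_n⟩`, for generators of degrees `p`. -/
def gradedComm (k : Type*) [Field k] {n : ℕ} (p : Fin n → ℕ) (a b : Fin n) :
    FreeAlgebra k (Fin n) :=
  FreeAlgebra.ι k a * FreeAlgebra.ι k b -
    ((-1 : k) ^ (p a * p b)) • (FreeAlgebra.ι k b * FreeAlgebra.ι k a)

namespace Stmt12Aux

variable {k : Type*} [Field k] {n : ℕ} {E : Type*}

noncomputable def parseWord (a b : E → Fin n) : List (Fin n) → Option (List E)
  | [] => some []
  | [_] => none
  | x :: y :: rest =>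
    if h : ∃ j, a j = x ∧ b j = y then (parseWord a b rest).map (h.choose :: ·)
    else none

variable (k) in
noncomputable def g (a b : E → Fin n) (w : FreeMonoid (Fin n)) : FreeAlgebra k E :=
  ((parseWord a b w.toList).map fun l => (l.map (FreeAlgebra.ι k)).prod).getD 0

variable (a b : E → Fin n)

theorem unique_edge (hdist : ∀ i j : E, i ≠ j → s(a i, b i) ≠ s(a j, b j))
    {i j : E} (h1 : a i = a j) (h2 : b i = b j) : i = j := by
  by_contra hne
  exact hdist i j hne (by rw [h1, h2])

theorem parse_cons (hdist : ∀ i j : E, i ≠ j → s(a i, b i) ≠ s(a j, b j))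
    (j : E) (l : List (Fin n)) :
    parseWord a b (a j :: b j :: l) = (parseWord a b l).map (j :: ·) := by
  rw [parseWord]
  have h : ∃ j', a j' = a j ∧ b j' = b j := ⟨j, rfl, rfl⟩
  rw [dif_pos h]
  have hc : h.choose = j := unique_edge a b hdist h.choose_spec.1 h.choose_spec.2
  rw [hc]

theorem parse_swap (hab : ∀ j, a j ≠ b j)
    (hdist : ∀ i j : E, i ≠ j → s(a i, b i) ≠ s(a j, b j))
    (j : E) (l : List (Fin n)) :
    parseWord a b (b j :: a j :: l) = none := by
  rw [parseWord, dif_neg]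
  rintro ⟨j', h1, h2⟩
  have : j' = j := by
    by_contra hne
    exact hdist j' j hne (by rw [h1, h2, Sym2.eq_swap])
  subst this
  exact hab j' h1

theorem g_one : g k a b 1 = 1 := by
  simp [g, parseWord, FreeMonoid.toList_one]

theorem g_cons (hdist : ∀ i j : E, i ≠ j → s(a i, b i) ≠ s(a j, b j))
    (j : E) (w : FreeMonoid (Fin n)) :
    g k a b (FreeMonoid.of (a j) * FreeMonoid.of (b j) * w)
      = FreeAlgebra.ι k j * g k a b w := by
  unfold g
  rw [show (FreeMonoid.of (a j) * FreeMonoid.of (b j) * w).toList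
      = a j :: b j :: w.toList from rfl]
  rw [parse_cons a b hdist]
  cases parseWord a b w.toList with
  | none => simp
  | some l => simp

theorem g_swap (hab : ∀ j, a j ≠ b j)
    (hdist : ∀ i j : E, i ≠ j → s(a i, b i) ≠ s(a j, b j))
    (j : E) (w : FreeMonoid (Fin n)) :
    g k a b (FreeMonoid.of (b j) * FreeMonoid.of (a j) * w) = 0 := by
  unfold g
  rw [show (FreeMonoid.of (b j) * FreeMonoid.of (a j) * w).toList
      = b j :: a j :: w.toList from rfl]
  rw [parse_swap a b hab hdist]
  rfl

theorem key (hab : ∀ j, a j ≠ b j)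
    (hdist : ∀ i j : E, i ≠ j → s(a i, b i) ≠ s(a j, b j))
    (j : E) (c : k) (f : MonoidAlgebra k (FreeMonoid (Fin n))) :
    Finsupp.linearCombination k (g k a b)
      ((MonoidAlgebra.single (FreeMonoid.of (a j) * FreeMonoid.of (b j)) (1 : k)
        - c • MonoidAlgebra.single (FreeMonoid.of (b j) * FreeMonoid.of (a j)) (1 : k)) * f).coeff
      = FreeAlgebra.ι k j * Finsupp.linearCombination k (g k a b) f.coeff := by
  induction f using MonoidAlgebra.induction_linear with
  | zero => simp
  | add f1 f2 hf1 hf2 => rw [mul_add, MonoidAlgebra.coeff_add, map_add, MonoidAlgebra.coeff_add, map_add, mul_add, hf1, hf2]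
  | single w r =>
    rw [sub_mul, smul_mul_assoc, MonoidAlgebra.single_mul_single,
      MonoidAlgebra.single_mul_single]
    simp only [MonoidAlgebra.coeff_sub, MonoidAlgebra.coeff_smul, MonoidAlgebra.coeff_single]
    rw [map_sub, map_smul,
      Finsupp.linearCombination_single, Finsupp.linearCombination_single,
      g_cons a b hdist, g_swap a b hab hdist, Finsupp.linearCombination_single]
    simp [mul_smul_comm]

theorem e_ι {X : Type*} (x : X) :
    FreeAlgebra.equivMonoidAlgebraFreeMonoid (FreeAlgebra.ι k x)
      = MonoidAlgebra.single (FreeMonoid.of x) (1 : k) := by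
  simp [FreeAlgebra.equivMonoidAlgebraFreeMonoid, MonoidAlgebra.of_apply]

theorem e_gradedComm (p : Fin n → ℕ) (x y : Fin n) :
    FreeAlgebra.equivMonoidAlgebraFreeMonoid (gradedComm k p x y)
      = MonoidAlgebra.single (FreeMonoid.of x * FreeMonoid.of y) (1 : k)
        - ((-1 : k) ^ (p x * p y)) •
          MonoidAlgebra.single (FreeMonoid.of y * FreeMonoid.of x) (1 : k) := by
  rw [gradedComm, map_sub, map_smul, map_mul, map_mul, e_ι, e_ι,
    MonoidAlgebra.single_mul_single, MonoidAlgebra.single_mul_single, one_mul]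

theorem e_prod (l : List E) :
    FreeAlgebra.equivMonoidAlgebraFreeMonoid ((l.map (FreeAlgebra.ι k)).prod)
      = MonoidAlgebra.single (FreeMonoid.ofList l) (1 : k) := by
  induction l with
  | nil => simp [MonoidAlgebra.one_def]
  | cons x t ih =>
      rw [List.map_cons, List.prod_cons, map_mul, e_ι, ih,
        MonoidAlgebra.single_mul_single, one_mul, FreeMonoid.ofList_cons]

theorem basis_eq (w : FreeMonoid E) :
    FreeAlgebra.basisFreeMonoid k E w = ((w.toList.map (FreeAlgebra.ι k)).prod) := by
  have h := e_prod (k := k) w.toList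
  rw [FreeMonoid.ofList_toList] at h
  rw [FreeAlgebra.basisFreeMonoid, Module.Basis.map_apply]
  have hb : (Finsupp.basisSingleOne : Module.Basis (FreeMonoid E) k _) w
      = Finsupp.single w 1 := by
    rw [Finsupp.coe_basisSingleOne]
  rw [hb]
  exact (LinearEquiv.symm_apply_eq _).mpr (by simp [h])

theorem retract (p : Fin n → ℕ) (hab : ∀ j, a j ≠ b j)
    (hdist : ∀ i j : E, i ≠ j → s(a i, b i) ≠ s(a j, b j)) (l : List E) :
    Finsupp.linearCombination k (g k a b)
      (FreeAlgebra.equivMonoidAlgebraFreeMonoid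
        ((FreeAlgebra.lift k fun j : E => gradedComm k p (a j) (b j))
          ((l.map (FreeAlgebra.ι k)).prod))).coeff
      = (l.map (FreeAlgebra.ι k)).prod := by
  induction l with
  | nil =>
      simp [MonoidAlgebra.one_def, g_one]
  | cons x t ih =>
      rw [List.map_cons, List.prod_cons, map_mul, map_mul, FreeAlgebra.lift_ι_apply,
        e_gradedComm, key a b hab hdist, ih]

end Stmt12Aux

/-- **(Lemma: bijection.)** Let `E` index the edges of a finite simple graph
on the vertices `1,…,n` (so the endpoints of an edge are distinct, and
distinct edges have distinct endpoint pairs), and let the generator `x_i` of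
the tensor algebra `T = k⟨x_1,…,x_n⟩` have positive degree `p i`.  Then the
evaluation map `k⟨y_j : j ∈ E⟩ → T` sending `y_j ↦ [x_{a_j}, x_{b_j}]` is
injective, i.e. it is an isomorphism onto the subalgebra `B` of `T` generated
by the graded commutators `[x_{a_j}, x_{b_j}]`. -/
theorem stmt_12 (k : Type*) [Field k] (hchar : ringChar k ≠ 2) {n : ℕ}
    (p : Fin n → ℕ) (hp : ∀ i, 0 < p i) {E : Type*} (a b : E → Fin n)
    (hab : ∀ j, a j ≠ b j)
    (hdist : ∀ i j : E, i ≠ j → s(a i, b i) ≠ s(a j, b j)) :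
    Function.Injective
      (FreeAlgebra.lift k (fun j : E => gradedComm k p (a j) (b j))) ∧
    (FreeAlgebra.lift k (fun j : E => gradedComm k p (a j) (b j))).range =
      Algebra.adjoin k (Set.range fun j : E => gradedComm k p (a j) (b j)) := by
  refine ⟨?_, (Algebra.adjoin_range_eq_range_freeAlgebra_lift _ _ _).symm⟩
  set Φ := FreeAlgebra.lift k (fun j : E => gradedComm k p (a j) (b j))
  let R : FreeAlgebra k (Fin n) →ₗ[k] FreeAlgebra k E :=
    (Finsupp.linearCombination k (Stmt12Aux.g k a b)).comp
      ((MonoidAlgebra.coeffLinearEquiv k).toLinearMap.comp (FreeAlgebra.equivMonoidAlgebraFreeMonoid : FreeAlgebra k (Fin n) ≃ₐ[k]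
        MonoidAlgebra k (FreeMonoid (Fin n))).toLinearMap)
  have hcomp : R.comp Φ.toLinearMap = LinearMap.id := by
    apply Module.Basis.ext (FreeAlgebra.basisFreeMonoid k E)
    intro w
    rw [Stmt12Aux.basis_eq]
    simpa [R] using Stmt12Aux.retract a b p hab hdist w.toList
  intro u v huv
  have hu := LinearMap.congr_fun hcomp u
  have hv := LinearMap.congr_fun hcomp v
  simp only [LinearMap.comp_apply, LinearMap.id_apply, AlgHom.toLinearMap_apply] at hu hv
  rw [← hu, ← hv, huv]
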